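/- Let o₁ = [l₁,u₁] and o₂ = [l₂,u₂] be two uncertain 1D objects of equal length, i.e. u₁ − l₁ = u₂ − l₂, with distinct midpoints m₁ < m₂, and let b = (m₁ + m₂)/2 be the bisector of the midpoints. Then p(b) = 1/2; moreover p(q) > 1/2 for every q < b, and p(q) < 1/2 for every q > b. In other words, the probabilistic bisector of two equi-range 1D objects is the bisector of their midpoints. -/

import Mathlib

open MeasureTheory
open scoped ENNReal

/-- The uniform probability measure on the closed interval `[a, b]`. -/
noncomputable def unif (a b : ℝ) : Measure ℝ :=
  (volume (Set.Icc a b))⁻¹ • volume.restrict (Set.Icc a b)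

/-- Probability that the uncertain object `[l₁,u₁]` is nearer to the query point `q`
than the uncertain object `[l₂,u₂]`. -/
noncomputable def nnProb (l₁ u₁ l₂ u₂ q : ℝ) : ℝ≥0∞ :=
  ((unif l₁ u₁).prod (unif l₂ u₂)) {xy : ℝ × ℝ | |xy.1 - q| < |xy.2 - q|}

namespace ProbBisectorAux

lemma abs_lt_abs_iff_cases (x y a : ℝ) :
    |x - a| < |y - a| ↔ (x < y ∧ 2*a < x + y) ∨ (y < x ∧ x + y < 2*a) := by
  constructor
  · intro h
    have h2 : (x - a)^2 < (y - a)^2 := by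
      nlinarith [sq_abs (x-a), sq_abs (y-a), abs_nonneg (x-a), abs_nonneg (y-a)]
    rcases lt_trichotomy x y with h3|h3|h3
    · exact Or.inl ⟨h3, by nlinarith⟩
    · exfalso; rw [h3] at h2; nlinarith
    · exact Or.inr ⟨h3, by nlinarith⟩
  · intro h
    have h2 : (x - a)^2 < (y - a)^2 := by rcases h with ⟨h3,h4⟩|⟨h3,h4⟩ <;> nlinarith
    nlinarith [sq_abs (x-a), sq_abs (y-a), abs_nonneg (x-a), abs_nonneg (y-a),
      sq_nonneg (|x-a| - |y-a|), sq_nonneg (|x-a| + |y-a|)]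

lemma unif_apply {a b : ℝ} {s : Set ℝ} (hs : MeasurableSet s) :
    unif a b s = (volume (Set.Icc a b))⁻¹ * volume (s ∩ Set.Icc a b) := by
  simp [unif, Measure.restrict_apply hs]

lemma isProb_unif {a b : ℝ} (h : a < b) : IsProbabilityMeasure (unif a b) := by
  constructor
  rw [unif_apply MeasurableSet.univ, Set.univ_inter, Real.volume_Icc,
    ENNReal.inv_mul_cancel] <;> simp [h.le, sub_pos.2 h, h]

lemma unif_singleton (a b t : ℝ) : unif a b {t} = 0 := by
  rw [unif_apply (measurableSet_singleton t)]
  have : volume ({t} ∩ Set.Icc a b) = 0 :=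
    le_antisymm (le_trans (measure_mono Set.inter_subset_left) (by simp)) zero_le
  simp [this]

lemma unif_map {a b a' b' : ℝ} {f : ℝ → ℝ} (hf : MeasurePreserving f volume volume)
    (hpre : f ⁻¹' Set.Icc a' b' = Set.Icc a b) (hvol : b - a = b' - a') :
    (unif a b).map f = unif a' b' := by
  have h1 : MeasurePreserving f (volume.restrict (Set.Icc a b))
      (volume.restrict (Set.Icc a' b')) := by
    rw [← hpre]; exact hf.restrict_preimage measurableSet_Icc
  unfold unif
  rw [Measure.map_smul, h1.map_eq, Real.volume_Icc, Real.volume_Icc, hvol]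


lemma mset_and {f g f' g' : ℝ × ℝ → ℝ} (hf : Measurable f) (hg : Measurable g)
    (hf' : Measurable f') (hg' : Measurable g') :
    MeasurableSet {p : ℝ × ℝ | f p < g p ∧ f' p < g' p} := by
  have h : {p : ℝ × ℝ | f p < g p ∧ f' p < g' p} =
      {p : ℝ × ℝ | f p < g p} ∩ {p : ℝ × ℝ | f' p < g' p} := rfl
  rw [h]
  exact (measurableSet_lt hf hg).inter (measurableSet_lt hf' hg')

lemma mset_and3 {f g f' g' f'' g'' : ℝ × ℝ → ℝ} (hf : Measurable f) (hg : Measurable g)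
    (hf' : Measurable f') (hg' : Measurable g') (hf'' : Measurable f'')
    (hg'' : Measurable g'') :
    MeasurableSet {p : ℝ × ℝ | (f p < g p ∧ f' p < g' p) ∧ f'' p < g'' p} := by
  have h : {p : ℝ × ℝ | (f p < g p ∧ f' p < g' p) ∧ f'' p < g'' p} =
      ({p : ℝ × ℝ | f p < g p} ∩ {p : ℝ × ℝ | f' p < g' p}) ∩
      {p : ℝ × ℝ | f'' p < g'' p} := rfl
  rw [h]
  exact ((measurableSet_lt hf hg).inter (measurableSet_lt hf' hg')).inter
    (measurableSet_lt hf'' hg'')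

section Main

variable {l₁ u₁ l₂ u₂ δ b : ℝ}

lemma prod_null_sum (h₂ : l₂ < u₂) (c : ℝ) :
    (unif l₁ u₁).prod (unif l₂ u₂) {p : ℝ × ℝ | p.1 + p.2 = c} = 0 := by
  haveI := isProb_unif h₂
  have hm : MeasurableSet {p : ℝ × ℝ | p.1 + p.2 = c} :=
    measurableSet_eq_fun (by fun_prop) measurable_const
  rw [Measure.prod_apply hm]
  have hsl : ∀ x : ℝ, (Prod.mk x ⁻¹' {p : ℝ × ℝ | p.1 + p.2 = c}) = {c - x} := by
    intro x; ext y; simp only [Set.mem_preimage, Set.mem_setOf_eq, Set.mem_singleton_iff]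
    constructor <;> intro h <;> linarith
  simp only [hsl, unif_singleton]
  simp

lemma prod_null_diff (h₂ : l₂ < u₂) (c : ℝ) :
    (unif l₁ u₁).prod (unif l₂ u₂) {p : ℝ × ℝ | p.2 - p.1 = c} = 0 := by
  haveI := isProb_unif h₂
  have hm : MeasurableSet {p : ℝ × ℝ | p.2 - p.1 = c} :=
    measurableSet_eq_fun (by fun_prop) measurable_const
  rw [Measure.prod_apply hm]
  have hsl : ∀ x : ℝ, (Prod.mk x ⁻¹' {p : ℝ × ℝ | p.2 - p.1 = c}) = {c + x} := by
    intro x; ext y; simp only [Set.mem_preimage, Set.mem_setOf_eq, Set.mem_singleton_iff]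
    constructor <;> intro h <;> linarith
  simp only [hsl, unif_singleton]
  simp

variable (hδ : 0 < δ) (h₁ : l₁ < u₁) (hl₂ : l₂ = l₁ + δ) (hu₂ : u₂ = u₁ + δ)
  (h2b : 2*b = l₁ + u₁ + δ)

include hδ h₁ hl₂ hu₂ in
lemma mp_phi : MeasurePreserving (fun p : ℝ × ℝ => (p.2 - δ, p.1 + δ))
    ((unif l₁ u₁).prod (unif l₂ u₂)) ((unif l₁ u₁).prod (unif l₂ u₂)) := by
  haveI := isProb_unif h₁
  haveI := isProb_unif (show l₂ < u₂ by rw [hl₂, hu₂]; linarith)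
  have hmap_add : (unif l₁ u₁).map (· + δ) = unif l₂ u₂ := by
    apply unif_map (measurePreserving_add_right volume δ)
    · rw [Set.preimage_add_const_Icc, hl₂, hu₂]; congr 1 <;> ring
    · rw [hl₂, hu₂]; ring
  have hmap_sub : (unif l₂ u₂).map (· - δ) = unif l₁ u₁ := by
    apply unif_map (measurePreserving_sub_right volume δ)
    · rw [Set.preimage_sub_const_Icc, hl₂, hu₂]
    · rw [hl₂, hu₂]; ring
  have hA : MeasurePreserving (· - δ) (unif l₂ u₂) (unif l₁ u₁) := ⟨by fun_prop, hmap_sub⟩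
  have hB : MeasurePreserving (· + δ) (unif l₁ u₁) (unif l₂ u₂) := ⟨by fun_prop, hmap_add⟩
  exact (hA.prod hB).comp Measure.measurePreserving_swap

include hδ h₁ hl₂ hu₂ h2b in
lemma mp_tau : MeasurePreserving (fun p : ℝ × ℝ => (2*b - p.2, 2*b - p.1))
    ((unif l₁ u₁).prod (unif l₂ u₂)) ((unif l₁ u₁).prod (unif l₂ u₂)) := by
  haveI := isProb_unif h₁
  haveI := isProb_unif (show l₂ < u₂ by rw [hl₂, hu₂]; linarith)
  have hmap_r1 : (unif l₁ u₁).map (fun t => 2*b - t) = unif l₂ u₂ := by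
    apply unif_map (Measure.measurePreserving_sub_left volume (2*b))
    · have e1 : 2*b - u₂ = l₁ := by rw [hu₂]; linarith
      have e2 : 2*b - l₂ = u₁ := by rw [hl₂]; linarith
      rw [Set.preimage_const_sub_Icc, e1, e2]
    · rw [hl₂, hu₂]; ring
  have hmap_r2 : (unif l₂ u₂).map (fun t => 2*b - t) = unif l₁ u₁ := by
    apply unif_map (Measure.measurePreserving_sub_left volume (2*b))
    · have e1 : 2*b - u₁ = l₂ := by rw [hl₂]; linarith
      have e2 : 2*b - l₁ = u₂ := by rw [hu₂]; linarith
      rw [Set.preimage_const_sub_Icc, e1, e2]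
    · rw [hl₂, hu₂]; ring
  have hA : MeasurePreserving (fun t => 2*b - t) (unif l₂ u₂) (unif l₁ u₁) :=
    ⟨by fun_prop, hmap_r2⟩
  have hB : MeasurePreserving (fun t => 2*b - t) (unif l₁ u₁) (unif l₂ u₂) :=
    ⟨by fun_prop, hmap_r1⟩
  exact (hA.prod hB).comp Measure.measurePreserving_swap

lemma measurable_E (q : ℝ) : MeasurableSet {p : ℝ × ℝ | |p.1 - q| < |p.2 - q|} :=
  measurableSet_lt (by fun_prop) (by fun_prop)

lemma measurable_E' (q : ℝ) : MeasurableSet {p : ℝ × ℝ | |p.2 - q| < |p.1 - q|} :=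
  measurableSet_lt (by fun_prop) (by fun_prop)

include h₁ hδ hl₂ hu₂ in
lemma fact1 (q : ℝ) :
    (unif l₁ u₁).prod (unif l₂ u₂) {p : ℝ × ℝ | |p.1 - q| < |p.2 - q|} +
    (unif l₁ u₁).prod (unif l₂ u₂) {p : ℝ × ℝ | |p.2 - q| < |p.1 - q|} = 1 := by
  have h₂ : l₂ < u₂ := by rw [hl₂, hu₂]; linarith
  haveI := isProb_unif h₁
  haveI := isProb_unif h₂
  set μ := (unif l₁ u₁).prod (unif l₂ u₂) with hμ
  haveI : IsProbabilityMeasure μ := by rw [hμ]; infer_instance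
  have hdisj : Disjoint {p : ℝ × ℝ | |p.1 - q| < |p.2 - q|}
      {p : ℝ × ℝ | |p.2 - q| < |p.1 - q|} := by
    rw [Set.disjoint_left]
    intro p hp hp'
    simp only [Set.mem_setOf_eq] at hp hp'
    exact absurd hp' (not_lt.2 (le_of_lt hp))
  have hunion : μ ({p : ℝ × ℝ | |p.1 - q| < |p.2 - q|} ∪ {p : ℝ × ℝ | |p.2 - q| < |p.1 - q|}) =
      μ {p : ℝ × ℝ | |p.1 - q| < |p.2 - q|} + μ {p : ℝ × ℝ | |p.2 - q| < |p.1 - q|} :=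
    measure_union hdisj (measurable_E' q)
  have hcover : (Set.univ : Set (ℝ × ℝ)) ⊆
      ({p : ℝ × ℝ | |p.1 - q| < |p.2 - q|} ∪ {p : ℝ × ℝ | |p.2 - q| < |p.1 - q|}) ∪
      ({p : ℝ × ℝ | p.2 - p.1 = 0} ∪ {p : ℝ × ℝ | p.1 + p.2 = 2*q}) := by
    intro p _
    rcases lt_trichotomy (|p.1 - q|) (|p.2 - q|) with h|h|h
    · exact Or.inl (Or.inl h)
    · rcases abs_eq_abs.1 h with h'|h'
      · exact Or.inr (Or.inl (show p.2 - p.1 = 0 by linarith))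
      · exact Or.inr (Or.inr (show p.1 + p.2 = 2*q by linarith))
    · exact Or.inl (Or.inr h)
  have hle1 : (1:ℝ≥0∞) ≤ μ {p : ℝ × ℝ | |p.1 - q| < |p.2 - q|} +
      μ {p : ℝ × ℝ | |p.2 - q| < |p.1 - q|} := by
    calc (1:ℝ≥0∞) = μ Set.univ := measure_univ.symm
      _ ≤ μ (({p : ℝ × ℝ | |p.1 - q| < |p.2 - q|} ∪ {p : ℝ × ℝ | |p.2 - q| < |p.1 - q|}) ∪
          ({p : ℝ × ℝ | p.2 - p.1 = 0} ∪ {p : ℝ × ℝ | p.1 + p.2 = 2*q})) := measure_mono hcover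
      _ ≤ μ ({p : ℝ × ℝ | |p.1 - q| < |p.2 - q|} ∪ {p : ℝ × ℝ | |p.2 - q| < |p.1 - q|}) +
          μ ({p : ℝ × ℝ | p.2 - p.1 = 0} ∪ {p : ℝ × ℝ | p.1 + p.2 = 2*q}) := measure_union_le _ _
      _ ≤ μ ({p : ℝ × ℝ | |p.1 - q| < |p.2 - q|} ∪ {p : ℝ × ℝ | |p.2 - q| < |p.1 - q|}) +
          (μ {p : ℝ × ℝ | p.2 - p.1 = 0} + μ {p : ℝ × ℝ | p.1 + p.2 = 2*q}) :=
          add_le_add_right (measure_union_le _ _) _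
      _ = μ ({p : ℝ × ℝ | |p.1 - q| < |p.2 - q|} ∪ {p : ℝ × ℝ | |p.2 - q| < |p.1 - q|}) := by
          rw [hμ, prod_null_diff h₂ 0, prod_null_sum h₂ (2*q)]; simp
      _ = _ := hunion
  have hle2 : μ {p : ℝ × ℝ | |p.1 - q| < |p.2 - q|} +
      μ {p : ℝ × ℝ | |p.2 - q| < |p.1 - q|} ≤ 1 := by
    rw [← hunion]; exact prob_le_one
  exact le_antisymm hle2 hle1

include h₁ hδ hl₂ hu₂ h2b in
lemma fact2 (q : ℝ) :
    (unif l₁ u₁).prod (unif l₂ u₂) {p : ℝ × ℝ | |p.1 - q| < |p.2 - q|} =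
    (unif l₁ u₁).prod (unif l₂ u₂) {p : ℝ × ℝ | |p.2 - (2*b - q)| < |p.1 - (2*b - q)|} := by
  have hτ := mp_tau hδ h₁ hl₂ hu₂ h2b
  have hpre : (fun p : ℝ × ℝ => (2*b - p.2, 2*b - p.1)) ⁻¹'
      {p : ℝ × ℝ | |p.1 - q| < |p.2 - q|} =
      {p : ℝ × ℝ | |p.2 - (2*b - q)| < |p.1 - (2*b - q)|} := by
    ext p
    simp only [Set.mem_preimage, Set.mem_setOf_eq]
    have k1 : 2*b - p.2 - q = -(p.2 - (2*b - q)) := by ring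
    have k2 : 2*b - p.1 - q = -(p.1 - (2*b - q)) := by ring
    rw [k1, k2, abs_neg, abs_neg]
  rw [← hpre, hτ.measure_preimage (measurable_E q).nullMeasurableSet]

include h₁ hδ hl₂ hu₂ in
lemma fact3 (q : ℝ) :
    (unif l₁ u₁).prod (unif l₂ u₂) {p : ℝ × ℝ | |p.2 - q| < |p.1 - q|} =
    (unif l₁ u₁).prod (unif l₂ u₂) {p : ℝ × ℝ | |p.1 + δ - q| < |p.2 - δ - q|} := by
  have hφ := mp_phi hδ h₁ hl₂ hu₂
  have hpre : (fun p : ℝ × ℝ => (p.2 - δ, p.1 + δ)) ⁻¹'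
      {p : ℝ × ℝ | |p.2 - q| < |p.1 - q|} =
      {p : ℝ × ℝ | |p.1 + δ - q| < |p.2 - δ - q|} := rfl
  rw [← hpre, hφ.measure_preimage (measurable_E' q).nullMeasurableSet]

include hδ h₁ hl₂ hu₂ h2b in
lemma fact4 {q : ℝ} (hq : q < b) :
    (unif l₁ u₁).prod (unif l₂ u₂) {p : ℝ × ℝ | |p.1 + δ - q| < |p.2 - δ - q|} <
    (unif l₁ u₁).prod (unif l₂ u₂) {p : ℝ × ℝ | |p.1 - q| < |p.2 - q|} := by
  have h₂ : l₂ < u₂ := by rw [hl₂, hu₂]; linarith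
  haveI := isProb_unif h₁
  haveI := isProb_unif h₂
  set μ := (unif l₁ u₁).prod (unif l₂ u₂) with hμ
  haveI : IsProbabilityMeasure μ := by rw [hμ]; infer_instance
  -- decompositions
  have hEeq : {p : ℝ × ℝ | |p.1 - q| < |p.2 - q|} =
      {p : ℝ × ℝ | p.1 < p.2 ∧ 2*q < p.1 + p.2} ∪
      {p : ℝ × ℝ | p.2 < p.1 ∧ p.1 + p.2 < 2*q} := by
    ext p
    simp only [Set.mem_setOf_eq, Set.mem_union]
    exact abs_lt_abs_iff_cases p.1 p.2 q
  have hBeq : {p : ℝ × ℝ | |p.1 + δ - q| < |p.2 - δ - q|} =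
      {p : ℝ × ℝ | 2*δ < p.2 - p.1 ∧ 2*q < p.1 + p.2} ∪
      {p : ℝ × ℝ | p.2 - p.1 < 2*δ ∧ p.1 + p.2 < 2*q} := by
    ext p
    simp only [Set.mem_setOf_eq, Set.mem_union]
    rw [abs_lt_abs_iff_cases (p.1 + δ) (p.2 - δ) q]
    constructor
    · rintro (⟨h3,h4⟩|⟨h3,h4⟩)
      · exact Or.inl ⟨by linarith, by linarith⟩
      · exact Or.inr ⟨by linarith, by linarith⟩
    · rintro (⟨h3,h4⟩|⟨h3,h4⟩)
      · exact Or.inl ⟨by linarith, by linarith⟩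
      · exact Or.inr ⟨by linarith, by linarith⟩
  -- measurability
  have mDposSgt : MeasurableSet {p : ℝ × ℝ | p.1 < p.2 ∧ 2*q < p.1 + p.2} :=
    mset_and (by fun_prop) (by fun_prop) (by fun_prop) (by fun_prop)
  have mN : MeasurableSet {p : ℝ × ℝ | p.2 < p.1 ∧ p.1 + p.2 < 2*q} :=
    mset_and (by fun_prop) (by fun_prop) (by fun_prop) (by fun_prop)
  have mA : MeasurableSet {p : ℝ × ℝ | 2*δ < p.2 - p.1 ∧ 2*q < p.1 + p.2} :=
    mset_and (by fun_prop) (by fun_prop) (by fun_prop) (by fun_prop)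
  have mDsmlSlt : MeasurableSet {p : ℝ × ℝ | p.2 - p.1 < 2*δ ∧ p.1 + p.2 < 2*q} :=
    mset_and (by fun_prop) (by fun_prop) (by fun_prop) (by fun_prop)
  have mMidSgt : MeasurableSet
      {p : ℝ × ℝ | (0 < p.2 - p.1 ∧ p.2 - p.1 < 2*δ) ∧ 2*q < p.1 + p.2} :=
    mset_and3 (by fun_prop) (by fun_prop) (by fun_prop) (by fun_prop) (by fun_prop)
      (by fun_prop)
  have mMidSlt : MeasurableSet
      {p : ℝ × ℝ | (0 < p.2 - p.1 ∧ p.2 - p.1 < 2*δ) ∧ p.1 + p.2 < 2*q} :=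
    mset_and3 (by fun_prop) (by fun_prop) (by fun_prop) (by fun_prop) (by fun_prop)
      (by fun_prop)
  -- measure of the decompositions
  have mE : μ {p : ℝ × ℝ | |p.1 - q| < |p.2 - q|} =
      μ {p : ℝ × ℝ | p.1 < p.2 ∧ 2*q < p.1 + p.2} +
      μ {p : ℝ × ℝ | p.2 < p.1 ∧ p.1 + p.2 < 2*q} := by
    rw [hEeq]
    refine measure_union ?_ mN
    rw [Set.disjoint_left]
    rintro p ⟨hp1, _⟩ ⟨hp2, _⟩
    exact absurd hp2 (not_lt.2 (le_of_lt hp1))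
  have mB : μ {p : ℝ × ℝ | |p.1 + δ - q| < |p.2 - δ - q|} =
      μ {p : ℝ × ℝ | 2*δ < p.2 - p.1 ∧ 2*q < p.1 + p.2} +
      μ {p : ℝ × ℝ | p.2 - p.1 < 2*δ ∧ p.1 + p.2 < 2*q} := by
    rw [hBeq]
    refine measure_union ?_ mDsmlSlt
    rw [Set.disjoint_left]
    rintro p ⟨hp1, _⟩ ⟨hp2, _⟩
    linarith
  -- step 1
  have step1 : μ {p : ℝ × ℝ | 2*δ < p.2 - p.1 ∧ 2*q < p.1 + p.2} +
      μ {p : ℝ × ℝ | (0 < p.2 - p.1 ∧ p.2 - p.1 < 2*δ) ∧ 2*q < p.1 + p.2} ≤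
      μ {p : ℝ × ℝ | p.1 < p.2 ∧ 2*q < p.1 + p.2} := by
    have hd : Disjoint {p : ℝ × ℝ | 2*δ < p.2 - p.1 ∧ 2*q < p.1 + p.2}
        {p : ℝ × ℝ | (0 < p.2 - p.1 ∧ p.2 - p.1 < 2*δ) ∧ 2*q < p.1 + p.2} := by
      rw [Set.disjoint_left]
      rintro p ⟨hp1, _⟩ ⟨⟨_, hp2⟩, _⟩
      linarith
    rw [← measure_union hd mMidSgt]
    apply measure_mono
    rintro p (⟨hp1, hp2⟩|⟨⟨hp1, _⟩, hp2⟩)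
    · exact ⟨by linarith, hp2⟩
    · exact ⟨by linarith, hp2⟩
  -- step 2
  have step2 : μ {p : ℝ × ℝ | p.2 - p.1 < 2*δ ∧ p.1 + p.2 < 2*q} ≤
      μ {p : ℝ × ℝ | p.2 < p.1 ∧ p.1 + p.2 < 2*q} +
      μ {p : ℝ × ℝ | (0 < p.2 - p.1 ∧ p.2 - p.1 < 2*δ) ∧ p.1 + p.2 < 2*q} := by
    have hsub : {p : ℝ × ℝ | p.2 - p.1 < 2*δ ∧ p.1 + p.2 < 2*q} ⊆
        ({p : ℝ × ℝ | p.2 < p.1 ∧ p.1 + p.2 < 2*q} ∪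
         {p : ℝ × ℝ | (0 < p.2 - p.1 ∧ p.2 - p.1 < 2*δ) ∧ p.1 + p.2 < 2*q}) ∪
        {p : ℝ × ℝ | p.2 - p.1 = 0} := by
      rintro p ⟨hp1, hp2⟩
      rcases lt_trichotomy (p.2 - p.1) 0 with h|h|h
      · exact Or.inl (Or.inl ⟨by linarith, hp2⟩)
      · exact Or.inr h
      · exact Or.inl (Or.inr ⟨⟨h, hp1⟩, hp2⟩)
    calc μ {p : ℝ × ℝ | p.2 - p.1 < 2*δ ∧ p.1 + p.2 < 2*q}
        ≤ μ (({p : ℝ × ℝ | p.2 < p.1 ∧ p.1 + p.2 < 2*q} ∪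
            {p : ℝ × ℝ | (0 < p.2 - p.1 ∧ p.2 - p.1 < 2*δ) ∧ p.1 + p.2 < 2*q}) ∪
            {p : ℝ × ℝ | p.2 - p.1 = 0}) := measure_mono hsub
      _ ≤ μ ({p : ℝ × ℝ | p.2 < p.1 ∧ p.1 + p.2 < 2*q} ∪
            {p : ℝ × ℝ | (0 < p.2 - p.1 ∧ p.2 - p.1 < 2*δ) ∧ p.1 + p.2 < 2*q}) +
            μ {p : ℝ × ℝ | p.2 - p.1 = 0} := measure_union_le _ _
      _ = μ ({p : ℝ × ℝ | p.2 < p.1 ∧ p.1 + p.2 < 2*q} ∪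
            {p : ℝ × ℝ | (0 < p.2 - p.1 ∧ p.2 - p.1 < 2*δ) ∧ p.1 + p.2 < 2*q}) := by
            rw [hμ, prod_null_diff h₂ 0]; simp
      _ ≤ _ := measure_union_le _ _
  -- step 3
  have step3 : μ {p : ℝ × ℝ | (0 < p.2 - p.1 ∧ p.2 - p.1 < 2*δ) ∧ p.1 + p.2 < 2*q} <
      μ {p : ℝ × ℝ | (0 < p.2 - p.1 ∧ p.2 - p.1 < 2*δ) ∧ 2*q < p.1 + p.2} := by
    have hτ := mp_tau hδ h₁ hl₂ hu₂ h2b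
    have hrefl : μ {p : ℝ × ℝ | (0 < p.2 - p.1 ∧ p.2 - p.1 < 2*δ) ∧ p.1 + p.2 < 2*q} =
        μ {p : ℝ × ℝ | (0 < p.2 - p.1 ∧ p.2 - p.1 < 2*δ) ∧ 4*b - 2*q < p.1 + p.2} := by
      have hpre : (fun p : ℝ × ℝ => (2*b - p.2, 2*b - p.1)) ⁻¹'
          {p : ℝ × ℝ | (0 < p.2 - p.1 ∧ p.2 - p.1 < 2*δ) ∧ p.1 + p.2 < 2*q} =
          {p : ℝ × ℝ | (0 < p.2 - p.1 ∧ p.2 - p.1 < 2*δ) ∧ 4*b - 2*q < p.1 + p.2} := by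
        ext p
        simp only [Set.mem_preimage, Set.mem_setOf_eq]
        constructor
        · rintro ⟨⟨ha, hc⟩, hd⟩
          exact ⟨⟨by linarith, by linarith⟩, by linarith⟩
        · rintro ⟨⟨ha, hc⟩, hd⟩
          exact ⟨⟨by linarith, by linarith⟩, by linarith⟩
      rw [← hpre, hτ.measure_preimage mMidSlt.nullMeasurableSet]
    rw [hrefl]
    obtain ⟨ε, hε0, hε1, hε2, hε3⟩ : ∃ ε : ℝ, 0 < ε ∧ ε ≤ (u₁ - l₁)/4 ∧ ε ≤ δ/4 ∧
        ε ≤ (b - q)/2 :=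
      ⟨min (min ((u₁ - l₁)/4) (δ/4)) ((b - q)/2),
        lt_min (lt_min (by linarith) (by linarith)) (by linarith),
        le_trans (min_le_left _ _) (min_le_left _ _),
        le_trans (min_le_left _ _) (min_le_right _ _), min_le_right _ _⟩
    have hGsub : (Set.Ioo ((l₁ + u₁)/2 - ε) ((l₁ + u₁)/2 + ε) ×ˢ
        Set.Ioo ((l₂ + u₂)/2 - ε) ((l₂ + u₂)/2 + ε)) ⊆
        {p : ℝ × ℝ | (0 < p.2 - p.1 ∧ p.2 - p.1 < 2*δ) ∧ 2*q < p.1 + p.2} := by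
      intro p hp
      rw [Set.mem_prod, Set.mem_Ioo, Set.mem_Ioo] at hp
      obtain ⟨⟨ha1, ha2⟩, ⟨hc1, hc2⟩⟩ := hp
      refine ⟨⟨?_, ?_⟩, ?_⟩ <;> linarith
    have hGdisj : Disjoint
        {p : ℝ × ℝ | (0 < p.2 - p.1 ∧ p.2 - p.1 < 2*δ) ∧ 4*b - 2*q < p.1 + p.2}
        (Set.Ioo ((l₁ + u₁)/2 - ε) ((l₁ + u₁)/2 + ε) ×ˢ
        Set.Ioo ((l₂ + u₂)/2 - ε) ((l₂ + u₂)/2 + ε)) := by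
      rw [Set.disjoint_right]
      intro p hp hp'
      rw [Set.mem_prod, Set.mem_Ioo, Set.mem_Ioo] at hp
      obtain ⟨⟨ha1, ha2⟩, ⟨hc1, hc2⟩⟩ := hp
      obtain ⟨_, hp3⟩ := hp'
      linarith
    have hGpos : μ (Set.Ioo ((l₁ + u₁)/2 - ε) ((l₁ + u₁)/2 + ε) ×ˢ
        Set.Ioo ((l₂ + u₂)/2 - ε) ((l₂ + u₂)/2 + ε)) ≠ 0 := by
      rw [hμ, Measure.prod_prod]
      have hio1 : Set.Ioo ((l₁ + u₁)/2 - ε) ((l₁ + u₁)/2 + ε) ⊆ Set.Icc l₁ u₁ := by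
        intro t ht
        rw [Set.mem_Ioo] at ht
        exact ⟨by linarith [ht.1], by linarith [ht.2]⟩
      have hio2 : Set.Ioo ((l₂ + u₂)/2 - ε) ((l₂ + u₂)/2 + ε) ⊆ Set.Icc l₂ u₂ := by
        intro t ht
        rw [Set.mem_Ioo] at ht
        exact ⟨by linarith [ht.1], by linarith [ht.2]⟩
      have hval1 : unif l₁ u₁ (Set.Ioo ((l₁ + u₁)/2 - ε) ((l₁ + u₁)/2 + ε)) ≠ 0 := by
        rw [unif_apply measurableSet_Ioo, Set.inter_eq_self_of_subset_left hio1,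
          Real.volume_Ioo, Real.volume_Icc]
        apply mul_ne_zero
        · exact ENNReal.inv_ne_zero.2 ENNReal.ofReal_ne_top
        · simp only [ne_eq, ENNReal.ofReal_eq_zero, not_le]; linarith
      have hval2 : unif l₂ u₂ (Set.Ioo ((l₂ + u₂)/2 - ε) ((l₂ + u₂)/2 + ε)) ≠ 0 := by
        rw [unif_apply measurableSet_Ioo, Set.inter_eq_self_of_subset_left hio2,
          Real.volume_Ioo, Real.volume_Icc]
        apply mul_ne_zero
        · exact ENNReal.inv_ne_zero.2 ENNReal.ofReal_ne_top
        · simp only [ne_eq, ENNReal.ofReal_eq_zero, not_le]; linarith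
      exact mul_ne_zero hval1 hval2
    have hsub2 : {p : ℝ × ℝ | (0 < p.2 - p.1 ∧ p.2 - p.1 < 2*δ) ∧ 4*b - 2*q < p.1 + p.2} ⊆
        {p : ℝ × ℝ | (0 < p.2 - p.1 ∧ p.2 - p.1 < 2*δ) ∧ 2*q < p.1 + p.2} := by
      rintro p ⟨hp1, hp2⟩
      exact ⟨hp1, by linarith⟩
    have hupper : μ {p : ℝ × ℝ | (0 < p.2 - p.1 ∧ p.2 - p.1 < 2*δ) ∧ 4*b - 2*q < p.1 + p.2} +
        μ (Set.Ioo ((l₁ + u₁)/2 - ε) ((l₁ + u₁)/2 + ε) ×ˢ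
        Set.Ioo ((l₂ + u₂)/2 - ε) ((l₂ + u₂)/2 + ε)) ≤
        μ {p : ℝ × ℝ | (0 < p.2 - p.1 ∧ p.2 - p.1 < 2*δ) ∧ 2*q < p.1 + p.2} := by
      rw [← measure_union hGdisj (measurableSet_Ioo.prod measurableSet_Ioo)]
      exact measure_mono (Set.union_subset hsub2 hGsub)
    calc μ {p : ℝ × ℝ | (0 < p.2 - p.1 ∧ p.2 - p.1 < 2*δ) ∧ 4*b - 2*q < p.1 + p.2}
        < μ {p : ℝ × ℝ | (0 < p.2 - p.1 ∧ p.2 - p.1 < 2*δ) ∧ 4*b - 2*q < p.1 + p.2} +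
          μ (Set.Ioo ((l₁ + u₁)/2 - ε) ((l₁ + u₁)/2 + ε) ×ˢ
          Set.Ioo ((l₂ + u₂)/2 - ε) ((l₂ + u₂)/2 + ε)) :=
          ENNReal.lt_add_right (measure_ne_top μ _) hGpos
      _ ≤ _ := hupper
  -- combine
  calc μ {p : ℝ × ℝ | |p.1 + δ - q| < |p.2 - δ - q|}
      = μ {p : ℝ × ℝ | 2*δ < p.2 - p.1 ∧ 2*q < p.1 + p.2} +
        μ {p : ℝ × ℝ | p.2 - p.1 < 2*δ ∧ p.1 + p.2 < 2*q} := mB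
    _ ≤ μ {p : ℝ × ℝ | 2*δ < p.2 - p.1 ∧ 2*q < p.1 + p.2} +
        (μ {p : ℝ × ℝ | p.2 < p.1 ∧ p.1 + p.2 < 2*q} +
        μ {p : ℝ × ℝ | (0 < p.2 - p.1 ∧ p.2 - p.1 < 2*δ) ∧ p.1 + p.2 < 2*q}) :=
        add_le_add_right step2 _
    _ < μ {p : ℝ × ℝ | 2*δ < p.2 - p.1 ∧ 2*q < p.1 + p.2} +
        (μ {p : ℝ × ℝ | p.2 < p.1 ∧ p.1 + p.2 < 2*q} +
        μ {p : ℝ × ℝ | (0 < p.2 - p.1 ∧ p.2 - p.1 < 2*δ) ∧ 2*q < p.1 + p.2}) := by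
        apply ENNReal.add_lt_add_left (measure_ne_top μ _)
        exact ENNReal.add_lt_add_left (measure_ne_top μ _) step3
    _ = (μ {p : ℝ × ℝ | 2*δ < p.2 - p.1 ∧ 2*q < p.1 + p.2} +
        μ {p : ℝ × ℝ | (0 < p.2 - p.1 ∧ p.2 - p.1 < 2*δ) ∧ 2*q < p.1 + p.2}) +
        μ {p : ℝ × ℝ | p.2 < p.1 ∧ p.1 + p.2 < 2*q} := by ring
    _ ≤ μ {p : ℝ × ℝ | p.1 < p.2 ∧ 2*q < p.1 + p.2} +
        μ {p : ℝ × ℝ | p.2 < p.1 ∧ p.1 + p.2 < 2*q} := add_le_add_left step1 _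
    _ = μ {p : ℝ × ℝ | |p.1 - q| < |p.2 - q|} := mE.symm


end Main

end ProbBisectorAux

theorem prob_bisector_equi_range (l₁ u₁ l₂ u₂ b : ℝ)
    (h₁ : l₁ < u₁) (h₂ : l₂ < u₂)
    (hlen : u₁ - l₁ = u₂ - l₂)
    (hmid : (l₁ + u₁) / 2 < (l₂ + u₂) / 2)
    (hb : b = ((l₁ + u₁) / 2 + (l₂ + u₂) / 2) / 2) :
    nnProb l₁ u₁ l₂ u₂ b = 1 / 2 ∧
    (∀ q : ℝ, q < b → nnProb l₁ u₁ l₂ u₂ q > 1 / 2) ∧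
    (∀ q : ℝ, q > b → nnProb l₁ u₁ l₂ u₂ q < 1 / 2) := by
  obtain ⟨δ, hδ, hl₂, hu₂, h2b⟩ : ∃ δ : ℝ, 0 < δ ∧ l₂ = l₁ + δ ∧ u₂ = u₁ + δ ∧
      2*b = l₁ + u₁ + δ :=
    ⟨(l₂ + u₂)/2 - (l₁ + u₁)/2, by linarith, by linarith, by linarith, by rw [hb]; ring⟩
  haveI := ProbBisectorAux.isProb_unif h₁
  haveI := ProbBisectorAux.isProb_unif h₂
  set μ := (unif l₁ u₁).prod (unif l₂ u₂) with hμ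
  haveI : IsProbabilityMeasure μ := by rw [hμ]; infer_instance
  have main_lt : ∀ q : ℝ, q < b → 1/2 < μ {p : ℝ × ℝ | |p.1 - q| < |p.2 - q|} := by
    intro q hq
    have hs := ProbBisectorAux.fact1 hδ h₁ hl₂ hu₂ q
    rw [ProbBisectorAux.fact3 hδ h₁ hl₂ hu₂ q] at hs
    have hlt := ProbBisectorAux.fact4 hδ h₁ hl₂ hu₂ h2b hq
    by_contra hcon
    push_neg at hcon
    have hbad : (1:ℝ≥0∞) < 1 := by
      calc (1:ℝ≥0∞) = μ {p : ℝ × ℝ | |p.1 - q| < |p.2 - q|} +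
            μ {p : ℝ × ℝ | |p.1 + δ - q| < |p.2 - δ - q|} := hs.symm
        _ < μ {p : ℝ × ℝ | |p.1 - q| < |p.2 - q|} +
            μ {p : ℝ × ℝ | |p.1 - q| < |p.2 - q|} :=
            ENNReal.add_lt_add_left (measure_ne_top μ _) hlt
        _ ≤ 1/2 + 1/2 := add_le_add hcon hcon
        _ = 1 := ENNReal.add_halves 1
    exact absurd hbad (lt_irrefl _)
  refine ⟨?_, ?_, ?_⟩
  · show μ {p : ℝ × ℝ | |p.1 - b| < |p.2 - b|} = 1/2
    have h1 : μ {p : ℝ × ℝ | |p.1 - b| < |p.2 - b|} =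
        μ {p : ℝ × ℝ | |p.2 - b| < |p.1 - b|} := by
      have h := ProbBisectorAux.fact2 hδ h₁ hl₂ hu₂ h2b b
      rwa [show 2*b - b = b by ring] at h
    have h2 : 2 * μ {p : ℝ × ℝ | |p.1 - b| < |p.2 - b|} = 1 := by
      calc 2 * μ {p : ℝ × ℝ | |p.1 - b| < |p.2 - b|}
          = μ {p : ℝ × ℝ | |p.1 - b| < |p.2 - b|} +
            μ {p : ℝ × ℝ | |p.1 - b| < |p.2 - b|} := two_mul _
        _ = μ {p : ℝ × ℝ | |p.1 - b| < |p.2 - b|} +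
            μ {p : ℝ × ℝ | |p.2 - b| < |p.1 - b|} := by rw [← h1]
        _ = 1 := ProbBisectorAux.fact1 hδ h₁ hl₂ hu₂ b
    rw [ENNReal.eq_div_iff two_ne_zero ENNReal.ofNat_ne_top]
    exact h2
  · intro q hq
    show 1/2 < μ {p : ℝ × ℝ | |p.1 - q| < |p.2 - q|}
    exact main_lt q hq
  · intro q hq
    show μ {p : ℝ × ℝ | |p.1 - q| < |p.2 - q|} < 1/2
    have hq'b : 2*b - q < b := by linarith
    have h1 : μ {p : ℝ × ℝ | |p.1 - q| < |p.2 - q|} =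
        μ {p : ℝ × ℝ | |p.2 - (2*b - q)| < |p.1 - (2*b - q)|} :=
      ProbBisectorAux.fact2 hδ h₁ hl₂ hu₂ h2b q
    have h2 := ProbBisectorAux.fact1 hδ h₁ hl₂ hu₂ (2*b - q)
    have h3 := main_lt (2*b - q) hq'b
    rw [h1]
    by_contra hcon
    push_neg at hcon
    have hbad : (1:ℝ≥0∞) < 1 := by
      calc (1:ℝ≥0∞) = 1/2 + 1/2 := (ENNReal.add_halves 1).symm
        _ ≤ 1/2 + μ {p : ℝ × ℝ | |p.2 - (2*b - q)| < |p.1 - (2*b - q)|} :=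
            add_le_add_right hcon _
        _ < μ {p : ℝ × ℝ | |p.1 - (2*b - q)| < |p.2 - (2*b - q)|} +
            μ {p : ℝ × ℝ | |p.2 - (2*b - q)| < |p.1 - (2*b - q)|} :=
            ENNReal.add_lt_add_right (measure_ne_top μ _) h3
        _ = 1 := h2
    exact absurd hbad (lt_irrefl _)
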